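/- If 0 < o ≤ OPT, then for every i ∈ {0,…,L}, every p ∈ Q_i, and every finite Z ⊆ ℝ^d with |Z| = k: dist(p,Z)² ≤ (10·d³/T_i(o))·Σ_{q∈Q^I} dist(q,Z)²; that is, the sensitivity of p with respect to Q^I is at most s′(p) = 10·d³/T_i(o). -/

import Mathlib

open scoped BigOperators Classical
open MeasureTheory

set_option maxHeartbeats 1000000

noncomputable section

/-- Points of `ℝ^d` with the Euclidean distance. -/
abbrev Pt (d : ℕ) := EuclideanSpace ℝ (Fin d)

/-- Side length `g_i = Δ / 2^i` of the grid `G_i`. -/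
def gside (Δ : ℕ) (i : ℤ) : ℝ := (Δ : ℝ) / (2 : ℝ) ^ i

/-- The half-open axis-parallel cube of side length `g` with corner `v + n·g`
(a cell of the shifted grid). -/
def cell (d : ℕ) (v : Pt d) (g : ℝ) (n : Fin d → ℤ) : Set (Pt d) :=
  {x | ∀ α : Fin d, v α + (n α : ℝ) * g ≤ x α ∧ x α < v α + ((n α : ℝ) + 1) * g}

/-- Index of the cell of side length `g` containing the point `p`. -/
def idx (d : ℕ) (v : Pt d) (g : ℝ) (p : Pt d) : Fin d → ℤ :=
  fun α => ⌊(p α - v α) / g⌋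

/-- `|C ∩ Q|`, the number of points of `Q` in the given cell. -/
def cellCount (d : ℕ) (Q : Finset (Pt d)) (v : Pt d) (g : ℝ) (n : Fin d → ℤ) : ℕ :=
  (Q.filter (fun p => p ∈ cell d v g n)).card

/-- The threshold `T_i(o) = (d/g_i)² · o / (100k)`. -/
def Tthr (d k Δ : ℕ) (o : ℝ) (i : ℤ) : ℝ :=
  ((d : ℝ) / gside Δ i) ^ 2 * o / (100 * (k : ℝ))

/-- A cell is heavy iff it is the cell of `G_{-1}` containing `Q`, or it is a nonempty
cell of some `G_i`, `0 ≤ i ≤ L-1`, whose estimate `ẑ` is at least `T_i(o)`. -/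
def Heavy (d k L Δ : ℕ) (Q : Finset (Pt d)) (v : Pt d) (o : ℝ)
    (zhat : ℤ → (Fin d → ℤ) → ℝ) (i : ℤ) (n : Fin d → ℤ) : Prop :=
  (i = -1 ∧ (Q : Set (Pt d)) ⊆ cell d v (gside Δ i) n) ∨
  (0 ≤ i ∧ i ≤ (L : ℤ) - 1 ∧ 0 < cellCount d Q v (gside Δ i) n ∧
    Tthr d k Δ o i ≤ zhat i n)

/-- A cell of `G_i` (`0 ≤ i ≤ L`) is crucial iff it is not heavy but all of its
ancestors are heavy. -/
def Crucial (d k L Δ : ℕ) (Q : Finset (Pt d)) (v : Pt d) (o : ℝ)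
    (zhat : ℤ → (Fin d → ℤ) → ℝ) (i : ℤ) (n : Fin d → ℤ) : Prop :=
  0 ≤ i ∧ i ≤ (L : ℤ) ∧ ¬ Heavy d k L Δ Q v o zhat i n ∧
  ∀ j : ℤ, -1 ≤ j → j < i → ∀ m : Fin d → ℤ,
    cell d v (gside Δ i) n ⊆ cell d v (gside Δ j) m →
      Heavy d k L Δ Q v o zhat j m

/-- `Q_i`, the set of points of `Q` lying in a crucial cell of `G_i`. -/
def Qlevel (d k L Δ : ℕ) (Q : Finset (Pt d)) (v : Pt d) (o : ℝ)
    (zhat : ℤ → (Fin d → ℤ) → ℝ) (i : ℤ) : Finset (Pt d) :=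
  Q.filter (fun p => Crucial d k L Δ Q v o zhat i (idx d v (gside Δ i) p))

/-- Accuracy guarantee of the estimation function `ẑ`: for every nonempty cell of
`G_i`, `0 ≤ i ≤ L-1`, either `|ẑ(C) - |C∩Q|| ≤ 0.1·T_i(o)` or
`0.99·|C∩Q| ≤ ẑ(C) ≤ 1.01·|C∩Q|`. -/
def ZhatAccurate (d k L Δ : ℕ) (Q : Finset (Pt d)) (v : Pt d) (o : ℝ)
    (zhat : ℤ → (Fin d → ℤ) → ℝ) : Prop :=
  ∀ i : ℤ, 0 ≤ i → i ≤ (L : ℤ) - 1 → ∀ n : Fin d → ℤ,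
    0 < cellCount d Q v (gside Δ i) n →
      (|zhat i n - (cellCount d Q v (gside Δ i) n : ℝ)| ≤ 0.1 * Tthr d k Δ o i ∨
        (0.99 * (cellCount d Q v (gside Δ i) n : ℝ) ≤ zhat i n ∧
          zhat i n ≤ 1.01 * (cellCount d Q v (gside Δ i) n : ℝ)))

/-- `γ = ε / (1600·L·d³)`. -/
def gammaPar (d L : ℕ) (ε : ℝ) : ℝ := ε / (1600 * (L : ℝ) * (d : ℝ) ^ 3)

/-- Accuracy guarantee of the estimates `q̂_i` of `|Q_i|`. -/
def QhatAccurate (d k L Δ : ℕ) (Q : Finset (Pt d)) (v : Pt d) (o ε : ℝ)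
    (zhat : ℤ → (Fin d → ℤ) → ℝ) (qhat : ℕ → ℝ) : Prop :=
  ∀ i : ℕ, i ≤ L →
    0 ≤ qhat i ∧
    (|qhat i - ((Qlevel d k L Δ Q v o zhat i).card : ℝ)| ≤
        0.1 * ε * gammaPar d L ε * Tthr d k Δ o i ∨
      ((1 - 0.01 * ε) * ((Qlevel d k L Δ Q v o zhat i).card : ℝ) ≤ qhat i ∧
        qhat i ≤ (1 + 0.01 * ε) * ((Qlevel d k L Δ Q v o zhat i).card : ℝ)))

/-- The set of levels `I = {i ∈ {0,…,L} : q̂_i ≥ γ·T_i(o)}`. -/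
def levelI (d k L Δ : ℕ) (o ε : ℝ) (qhat : ℕ → ℝ) : Finset ℕ :=
  (Finset.range (L + 1)).filter
    (fun i => gammaPar d L ε * Tthr d k Δ o i ≤ qhat i)

/-- `Q^I = ∪_{i ∈ I} Q_i`. -/
def QI (d k L Δ : ℕ) (Q : Finset (Pt d)) (v : Pt d) (o ε : ℝ)
    (zhat : ℤ → (Fin d → ℤ) → ℝ) (qhat : ℕ → ℝ) : Finset (Pt d) :=
  (levelI d k L Δ o ε qhat).biUnion (fun i => Qlevel d k L Δ Q v o zhat i)

/-- `dist(q, Z) = min_{z ∈ Z} dist(q, z)`. -/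
def nearDist (d : ℕ) (q : Pt d) (Z : Finset (Pt d)) : ℝ :=
  sInf ((dist q) '' (Z : Set (Pt d)))

/-- `cost(P, Z) = Σ_{q ∈ P} dist(q, Z)²`. -/
def cost (d : ℕ) (P Z : Finset (Pt d)) : ℝ :=
  ∑ q ∈ P, nearDist d q Z ^ 2

/-- `OPT`, the optimal `k`-means cost of `Q`. -/
def OPTcost (d k : ℕ) (Q : Finset (Pt d)) : ℝ :=
  sInf {c : ℝ | ∃ Z : Finset (Pt d), Z.card = k ∧ c = cost d Q Z}

/-- Distance between two sets: `inf {dist x z : x ∈ C, z ∈ Z}`. -/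
def setDist (d : ℕ) (C Z : Set (Pt d)) : ℝ := sInf (Set.image2 dist C Z)

/-- A cell `C ∈ G_i` is a center cell w.r.t. `Z*` if `dist(C, Z*) ≤ g_i/(2d)`. -/
def IsCenterCell (d Δ : ℕ) (v : Pt d) (Zstar : Finset (Pt d)) (i : ℤ)
    (n : Fin d → ℤ) : Prop :=
  setDist d (cell d v (gside Δ i) n) (Zstar : Set (Pt d)) ≤ gside Δ i / (2 * (d : ℝ))

/-- The box `[0, Δ]^d` from which the random shift is drawn. -/
def shiftBox (d Δ : ℕ) : Set (Pt d) := {v | ∀ α : Fin d, v α ∈ Set.Icc (0 : ℝ) (Δ : ℝ)}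


-- ========================= auxiliary lemmas =========================
section Aux

variable {d : ℕ}

lemma nearDist_nonneg (q : Pt d) (Z : Finset (Pt d)) : 0 ≤ nearDist d q Z := by
  apply Real.sInf_nonneg
  rintro x ⟨z, _, rfl⟩
  exact dist_nonneg

lemma nearDist_le (q : Pt d) {Z : Finset (Pt d)} {z : Pt d} (hz : z ∈ Z) :
    nearDist d q Z ≤ dist q z := by
  apply csInf_le
  · exact ⟨0, by rintro x ⟨w, _, rfl⟩; exact dist_nonneg⟩
  · exact ⟨z, hz, rfl⟩

lemma exists_nearDist (q : Pt d) {Z : Finset (Pt d)} (hZ : Z.Nonempty) :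
    ∃ z ∈ Z, nearDist d q Z = dist q z := by
  obtain ⟨z0, hz0⟩ := hZ
  have hne : ((dist q) '' (Z : Set (Pt d))).Nonempty := ⟨_, ⟨z0, hz0, rfl⟩⟩
  have hfin : ((dist q) '' (Z : Set (Pt d))).Finite := (Z.finite_toSet.image _)
  obtain ⟨z, hzZ, hz⟩ := hne.csInf_mem hfin
  exact ⟨z, hzZ, hz.symm⟩

lemma nearDist_triangle (p q : Pt d) {Z : Finset (Pt d)} (hZ : Z.Nonempty) :
    nearDist d p Z ≤ dist p q + nearDist d q Z := by
  obtain ⟨z, hzZ, hz⟩ := exists_nearDist q hZ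
  calc nearDist d p Z ≤ dist p z := nearDist_le p hzZ
    _ ≤ dist p q + dist q z := dist_triangle p q z
    _ = dist p q + nearDist d q Z := by rw [hz]

lemma cost_nonneg (P Z : Finset (Pt d)) : 0 ≤ cost d P Z :=
  Finset.sum_nonneg fun _ _ => sq_nonneg _

lemma OPT_le_cost (k : ℕ) (Q Z : Finset (Pt d)) (hZ : Z.card = k) :
    OPTcost d k Q ≤ cost d Q Z := by
  apply csInf_le
  · exact ⟨0, by rintro c ⟨W, _, rfl⟩; exact cost_nonneg _ _⟩
  · exact ⟨Z, hZ, rfl⟩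

lemma floor_div_nat' (a : ℝ) (t : ℕ) (ht : 0 < t) : ⌊a / (t : ℝ)⌋ = ⌊a⌋ / (t : ℤ) := by
  have htR : (0:ℝ) < (t:ℝ) := by exact_mod_cast ht
  have htZ : (0:ℤ) < (t:ℤ) := by exact_mod_cast ht
  have hmod : ⌊a⌋ % (t:ℤ) + (t:ℤ) * (⌊a⌋ / (t:ℤ)) = ⌊a⌋ := Int.emod_add_mul_ediv _ _
  have h0 : 0 ≤ ⌊a⌋ % (t:ℤ) := Int.emod_nonneg _ (by omega)
  have hlt : ⌊a⌋ % (t:ℤ) < (t:ℤ) := Int.emod_lt_of_pos _ htZ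
  have hfl : (⌊a⌋ : ℝ) ≤ a := Int.floor_le a
  have hfl2 : a < (⌊a⌋ : ℝ) + 1 := Int.lt_floor_add_one a
  have hmodR : ((⌊a⌋ % (t:ℤ) : ℤ) : ℝ) + (t:ℝ) * ((⌊a⌋ / (t:ℤ) : ℤ) : ℝ) = (⌊a⌋ : ℝ) := by
    exact_mod_cast congrArg (fun z : ℤ => (z : ℝ)) hmod
  have h0R : (0:ℝ) ≤ ((⌊a⌋ % (t:ℤ) : ℤ) : ℝ) := by exact_mod_cast h0
  have hltR : ((⌊a⌋ % (t:ℤ) : ℤ) : ℝ) < (t:ℝ) := by exact_mod_cast hlt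
  have hle : ⌊a⌋ % (t:ℤ) ≤ (t:ℤ) - 1 := by omega
  have hleR : ((⌊a⌋ % (t:ℤ) : ℤ) : ℝ) ≤ (t:ℝ) - 1 := by exact_mod_cast hle
  rw [Int.floor_eq_iff]
  constructor
  · rw [le_div_iff₀ htR]; nlinarith
  · rw [div_lt_iff₀ htR]; push_cast; nlinarith

lemma floor_eq_of_interval {g a y : ℝ} (hg : 0 < g) {n : ℤ}
    (h1 : a + (n:ℝ) * g ≤ y) (h2 : y < a + ((n:ℝ)+1) * g) : ⌊(y - a)/g⌋ = n := by
  rw [Int.floor_eq_iff]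
  constructor
  · rw [le_div_iff₀ hg]; linarith
  · rw [div_lt_iff₀ hg]; push_cast; linarith

lemma interval_of_floor {g a y : ℝ} (hg : 0 < g) :
    a + (⌊(y-a)/g⌋ : ℝ) * g ≤ y ∧ y < a + ((⌊(y-a)/g⌋:ℝ)+1) * g := by
  have h1 : ((⌊(y-a)/g⌋ : ℤ) : ℝ) ≤ (y-a)/g := Int.floor_le _
  have h2 : (y-a)/g < (⌊(y-a)/g⌋ : ℤ) + 1 := Int.lt_floor_add_one _
  rw [le_div_iff₀ hg] at h1
  rw [div_lt_iff₀ hg] at h2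
  constructor
  · linarith
  · push_cast at h2 ⊢; linarith

lemma mem_cell_iff {v : Pt d} {g : ℝ} (hg : 0 < g) {n : Fin d → ℤ} {x : Pt d} :
    x ∈ cell d v g n ↔ n = idx d v g x := by
  simp only [cell, Set.mem_setOf_eq, idx]
  constructor
  · intro h
    funext α
    exact (floor_eq_of_interval hg (h α).1 (h α).2).symm
  · rintro rfl α
    exact interval_of_floor hg

lemma self_mem_cell {v : Pt d} {g : ℝ} (hg : 0 < g) (x : Pt d) :
    x ∈ cell d v g (idx d v g x) := (mem_cell_iff hg).mpr rfl

lemma gside_pos {Δ : ℕ} (hΔ : 0 < Δ) (i : ℤ) : 0 < gside Δ i := by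
  unfold gside
  exact div_pos (by exact_mod_cast hΔ) (zpow_pos (by norm_num) i)

lemma gside_coarse {Δ : ℕ} {j i : ℤ} (hji : j ≤ i) :
    gside Δ j = ((2 ^ (i - j).toNat : ℕ) : ℝ) * gside Δ i := by
  unfold gside
  have h2 : ((2 ^ (i-j).toNat : ℕ) : ℝ) = (2:ℝ) ^ (i - j) := by
    push_cast
    rw [← zpow_natCast, Int.toNat_of_nonneg (by omega)]
  have hne : ∀ m : ℤ, ((2:ℝ) ^ m) ≠ 0 := fun m => zpow_ne_zero m two_ne_zero
  rw [h2, zpow_sub₀ (two_ne_zero)]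
  field_simp

lemma idx_coarse {v : Pt d} {g : ℝ} {t : ℕ} (ht : 0 < t) (x : Pt d) (α : Fin d) :
    idx d v ((t:ℝ) * g) x α = idx d v g x α / (t:ℤ) := by
  unfold idx
  rw [show (x α - v α) / ((t:ℝ)*g) = (x α - v α)/g/(t:ℝ) by rw [div_div, mul_comm],
    floor_div_nat' _ _ ht]

lemma cell_subset_cell {Δ : ℕ} (hΔ : 0 < Δ) {v : Pt d} {j i : ℤ} (hji : j ≤ i) (p : Pt d) :
    cell d v (gside Δ i) (idx d v (gside Δ i) p) ⊆
      cell d v (gside Δ j) (idx d v (gside Δ j) p) := by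
  intro x hx
  have hgi := gside_pos hΔ i
  have hgj := gside_pos hΔ j
  have hxi : idx d v (gside Δ i) p = idx d v (gside Δ i) x := (mem_cell_iff hgi).mp hx
  have ht : 0 < 2 ^ (i - j).toNat := pow_pos (by norm_num) _
  rw [mem_cell_iff hgj]
  funext α
  rw [gside_coarse (Δ := Δ) hji, idx_coarse ht, idx_coarse ht, ← hxi]

lemma Tthr_pos {k Δ : ℕ} (hd : 0 < d) (hk : 0 < k) (hΔ : 0 < Δ) {o : ℝ} (ho : 0 < o)
    (i : ℤ) : 0 < Tthr d k Δ o i := by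
  unfold Tthr
  have hg := gside_pos (Δ := Δ) hΔ i
  have h1 : (0:ℝ) < (d:ℝ)/gside Δ i := div_pos (by exact_mod_cast hd) hg
  have h2 : (0:ℝ) < 100 * (k:ℝ) := by
    have : (0:ℝ) < (k:ℝ) := by exact_mod_cast hk
    linarith
  exact div_pos (mul_pos (pow_pos h1 2) ho) h2

lemma Tthr_succ {k Δ : ℕ} (hΔ : 0 < Δ) (o : ℝ) (j : ℤ) :
    Tthr d k Δ o (j - 1) = Tthr d k Δ o j / 4 := by
  unfold Tthr gside
  rw [zpow_sub_one₀ (two_ne_zero)]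
  have hne : ((2:ℝ) ^ j) ≠ 0 := zpow_ne_zero j two_ne_zero
  field_simp
  ring

lemma Tthr_mul_gsq {k Δ : ℕ} (hΔ : 0 < Δ) (o : ℝ) (j : ℤ) :
    Tthr d k Δ o j * (gside Δ j)^2 = (d:ℝ)^2 * o / (100 * (k:ℝ)) := by
  have hg := (gside_pos (Δ := Δ) hΔ j).ne'
  have hg2 : (gside Δ j)^2 ≠ 0 := pow_ne_zero _ hg
  have h1 : ((d:ℝ)/gside Δ j)^2 * (gside Δ j)^2 = (d:ℝ)^2 := by
    rw [div_pow, div_mul_cancel₀ _ hg2]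
  calc ((d:ℝ) / gside Δ j) ^ 2 * o / (100 * (k:ℝ)) * (gside Δ j)^2
      = ((d:ℝ)/gside Δ j)^2 * (gside Δ j)^2 * o / (100 * (k:ℝ)) := by ring
    _ = (d:ℝ)^2 * o / (100 * (k:ℝ)) := by rw [h1]

lemma dist_sq_le_of_mem_cell {v : Pt d} {g : ℝ} (hg : 0 < g) {n : Fin d → ℤ} {x y : Pt d}
    (hx : x ∈ cell d v g n) (hy : y ∈ cell d v g n) :
    dist x y ^ 2 ≤ (d:ℝ) * g ^ 2 := by
  rw [EuclideanSpace.dist_eq, Real.sq_sqrt (Finset.sum_nonneg fun i _ => sq_nonneg _)]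
  have hstep : ∑ α : Fin d, dist (x α) (y α) ^ 2 ≤ ∑ _α : Fin d, g^2 := by
    apply Finset.sum_le_sum
    intro α _
    have h1 := hx α
    have h2 := hy α
    rw [Real.dist_eq]
    have habs : |x α - y α| ≤ g := by
      rw [abs_le]; constructor
      · nlinarith [h1.1, h2.2]
      · nlinarith [h1.2, h2.1]
    exact pow_le_pow_left₀ (abs_nonneg _) habs 2
  have hconst : ∑ _α : Fin d, g^2 = (d:ℝ) * g^2 := by
    rw [Finset.sum_const, Finset.card_univ, Fintype.card_fin, nsmul_eq_mul]
  linarith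

lemma heavy_count_lb {k L Δ : ℕ} {Q : Finset (Pt d)} {v : Pt d} {o : ℝ}
    {zhat : ℤ → (Fin d → ℤ) → ℝ} (hz : ZhatAccurate d k L Δ Q v o zhat) {j : ℤ}
    (hj : 0 ≤ j) (hT : 0 ≤ Tthr d k Δ o j)
    {n : Fin d → ℤ} (hH : Heavy d k L Δ Q v o zhat j n) :
    0.9 * Tthr d k Δ o j ≤ (cellCount d Q v (gside Δ j) n : ℝ) := by
  rcases hH with ⟨hj1, _⟩ | ⟨_, hjL, hpos, hzh⟩
  · exfalso; omega
  have hc0 : (0:ℝ) ≤ (cellCount d Q v (gside Δ j) n : ℝ) := Nat.cast_nonneg _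
  rcases hz j hj hjL n hpos with hadd | ⟨_, hhi⟩
  · have h := abs_le.mp hadd
    linarith [h.1, h.2]
  · linarith

lemma opt_le_card {k Δ : ℕ} (hd : 1 ≤ d) (hk : 1 ≤ k) {Q : Finset (Pt d)}
    (hQ : ∀ p ∈ Q, ∀ α : Fin d, ∃ m : ℤ, 1 ≤ m ∧ m ≤ (Δ:ℤ) ∧ p α = (m:ℝ))
    {q₀ : Pt d} (hq₀ : q₀ ∈ Q) :
    OPTcost d k Q ≤ (Q.card : ℝ) * ((d:ℝ) * (Δ:ℝ)^2) := by
  classical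
  set e : Pt d := EuclideanSpace.single ⟨0, hd⟩ (1:ℝ) with he
  have hinj : Function.Injective (fun j : ℕ => q₀ + (j:ℝ) • e) := by
    intro a b hab
    have h := congrArg (fun f : Pt d => f ⟨0, hd⟩) hab
    simp only [he, PiLp.add_apply, PiLp.smul_apply, EuclideanSpace.single_apply,
      if_pos rfl, if_true, smul_eq_mul, mul_one, add_right_inj] at h
    exact_mod_cast h
  set Z₀ : Finset (Pt d) := Finset.image (fun j : ℕ => q₀ + (j:ℝ) • e) (Finset.range k) with hZ₀
  have hcard : Z₀.card = k := by
    rw [hZ₀, Finset.card_image_of_injective _ hinj, Finset.card_range]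
  have hq₀Z : q₀ ∈ Z₀ := by
    rw [hZ₀]
    exact Finset.mem_image.mpr ⟨0, Finset.mem_range.mpr hk, by simp⟩
  refine le_trans (OPT_le_cost k Q Z₀ hcard) ?_
  unfold cost
  have hbd : ∀ q ∈ Q, nearDist d q Z₀ ^ 2 ≤ (d:ℝ) * (Δ:ℝ)^2 := by
    intro q hq
    have h1 : nearDist d q Z₀ ≤ dist q q₀ := nearDist_le q hq₀Z
    have h2 : nearDist d q Z₀ ^ 2 ≤ dist q q₀ ^ 2 :=
      pow_le_pow_left₀ (nearDist_nonneg q Z₀) h1 2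
    refine le_trans h2 ?_
    rw [EuclideanSpace.dist_eq, Real.sq_sqrt (Finset.sum_nonneg fun i _ => sq_nonneg _)]
    calc ∑ α : Fin d, dist (q α) (q₀ α) ^ 2 ≤ ∑ _α : Fin d, (Δ:ℝ)^2 := by
          apply Finset.sum_le_sum
          intro α _
          obtain ⟨m, hm1, hm2, hm3⟩ := hQ q hq α
          obtain ⟨m', hm1', hm2', hm3'⟩ := hQ q₀ hq₀ α
          rw [Real.dist_eq, hm3, hm3']
          have hZint : ((m:ℝ) - (m':ℝ))^2 ≤ ((Δ:ℤ):ℝ)^2 := by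
            have : (m - m')^2 ≤ ((Δ:ℤ))^2 := by nlinarith
            exact_mod_cast this
          calc |(m:ℝ) - (m':ℝ)| ^ 2 = ((m:ℝ) - (m':ℝ))^2 := sq_abs _
            _ ≤ ((Δ:ℤ):ℝ)^2 := hZint
            _ = (Δ:ℝ)^2 := by push_cast; ring
      _ = (d:ℝ) * (Δ:ℝ)^2 := by
          rw [Finset.sum_const, Finset.card_univ, Fintype.card_fin, nsmul_eq_mul]
  calc ∑ q ∈ Q, nearDist d q Z₀ ^ 2 ≤ ∑ _q ∈ Q, (d:ℝ) * (Δ:ℝ)^2 :=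
        Finset.sum_le_sum hbd
    _ = (Q.card : ℝ) * ((d:ℝ) * (Δ:ℝ)^2) := by
        rw [Finset.sum_const, nsmul_eq_mul]

lemma key_bound (d k L Δ : ℕ) (hd : 1 ≤ d) (hk : 1 ≤ k) (hL : 1 ≤ L) (hΔ : 0 < Δ)
    (v : Pt d) (Q : Finset (Pt d))
    (hQ : ∀ p ∈ Q, ∀ α : Fin d, ∃ m : ℤ, 1 ≤ m ∧ m ≤ (Δ:ℤ) ∧ p α = (m:ℝ))
    (o : ℝ) (ho : 0 < o) (hoOPT : o ≤ OPTcost d k Q)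
    (zhat : ℤ → (Fin d → ℤ) → ℝ) (hz : ZhatAccurate d k L Δ Q v o zhat)
    (j : ℤ) (hj0 : 0 ≤ j) (hjL : j ≤ (L:ℤ))
    (q₀ : Pt d) (hq₀ : q₀ ∈ Qlevel d k L Δ Q v o zhat j)
    (Z : Finset (Pt d)) (hZk : Z.card = k) :
    Tthr d k Δ o j * nearDist d q₀ Z ^ 2 ≤ 9 * (d:ℝ)^3 * cost d Q Z := by
  classical
  have hdR : (1:ℝ) ≤ (d:ℝ) := by exact_mod_cast hd
  have hkR : (1:ℝ) ≤ (k:ℝ) := by exact_mod_cast hk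
  have hd3 : (1:ℝ) ≤ (d:ℝ)^3 := by
    have := pow_le_pow_left₀ (zero_le_one) hdR 3
    simpa using this
  have hZne : Z.Nonempty := Finset.card_pos.mp (by omega)
  have hcost1 : o ≤ cost d Q Z := le_trans hoOPT (OPT_le_cost k Q Z hZk)
  have hcostnn : 0 ≤ cost d Q Z := le_trans ho.le hcost1
  obtain ⟨hq₀Q, hcr⟩ := Finset.mem_filter.mp hq₀
  have hTpos : 0 < Tthr d k Δ o j := Tthr_pos (by omega) (by omega) hΔ ho j
  have hsub := cell_subset_cell (v := v) hΔ (show j - 1 ≤ j by omega) q₀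
  have hheavy : Heavy d k L Δ Q v o zhat (j-1) (idx d v (gside Δ (j-1)) q₀) :=
    hcr.2.2.2 (j-1) (by omega) (by omega) _ hsub
  set C := cell d v (gside Δ (j-1)) (idx d v (gside Δ (j-1)) q₀) with hC
  set S := Q.filter (fun q => q ∈ C) with hS
  have hq₀S : q₀ ∈ S :=
    Finset.mem_filter.mpr ⟨hq₀Q, self_mem_cell (gside_pos hΔ _) q₀⟩
  set N := ((S.card : ℕ) : ℝ) with hN
  have hN1 : (1:ℝ) ≤ N := by
    have h1 : 1 ≤ S.card := Finset.card_pos.mpr ⟨q₀, hq₀S⟩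
    rw [hN]
    exact_mod_cast h1
  have hNpos : (0:ℝ) < N := lt_of_lt_of_le one_pos hN1
  -- pointwise bound inside the parent cell
  have hpt : ∀ q ∈ S, nearDist d q₀ Z ^2
      ≤ 2 * nearDist d q Z ^2 + 2*(d:ℝ)*(gside Δ (j-1))^2 := by
    intro q hqS
    obtain ⟨hqQ, hqC⟩ := Finset.mem_filter.mp hqS
    have h1 := nearDist_triangle q₀ q hZne
    have h2 : dist q₀ q ^ 2 ≤ (d:ℝ) * (gside Δ (j-1))^2 :=
      dist_sq_le_of_mem_cell (gside_pos hΔ _) (self_mem_cell (gside_pos hΔ _) q₀) hqC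
    have h3 := nearDist_nonneg q₀ Z
    have h4 := nearDist_nonneg q Z
    have h5 := dist_nonneg (x := q₀) (y := q)
    nlinarith [sq_nonneg (dist q₀ q - nearDist d q Z)]
  have hSsub : ∑ q ∈ S, nearDist d q Z ^2 ≤ cost d Q Z :=
    Finset.sum_le_sum_of_subset_of_nonneg (Finset.filter_subset _ _)
      (fun q _ _ => sq_nonneg _)
  have hsum : N * nearDist d q₀ Z ^2
      ≤ 2 * cost d Q Z + 2*N*(d:ℝ)*(gside Δ (j-1))^2 := by
    have hmono := Finset.sum_le_sum hpt
    have hA : ∑ _q ∈ S, nearDist d q₀ Z ^2 = N * nearDist d q₀ Z^2 := by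
      rw [Finset.sum_const, nsmul_eq_mul]
    have hB : ∑ q ∈ S, (2 * nearDist d q Z ^2 + 2*(d:ℝ)*(gside Δ (j-1))^2)
        = 2 * (∑ q ∈ S, nearDist d q Z^2) + N * (2*(d:ℝ)*(gside Δ (j-1))^2) := by
      rw [Finset.sum_add_distrib, Finset.sum_const, nsmul_eq_mul, ← Finset.mul_sum]
    rw [hA, hB] at hmono
    nlinarith [hSsub]
  have hgrel : gside Δ (j-1) = 2 * gside Δ j := by
    rw [gside_coarse (show j-1 ≤ j by omega)]
    norm_num [show j - (j-1) = 1 by ring]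
  have hTg := Tthr_mul_gsq (d := d) (k := k) hΔ o j
  -- main case analysis for the heavy parent
  have hkey : 2 * Tthr d k Δ o j * cost d Q Z ≤ 8.9 * (N * ((d:ℝ)^3 * cost d Q Z)) := by
    have hNd3c : (0:ℝ) ≤ N * ((d:ℝ)^3 * cost d Q Z) := by positivity
    rcases hheavy with ⟨hj1, hQC⟩ | hR
    · -- j = 0 : parent is the level (-1) cell containing all of Q
      have hj0' : j = 0 := by omega
      have hSQ : S = Q := by
        rw [hS]
        exact Finset.filter_true_of_mem (fun q hq => hQC hq)
      have hoN : o ≤ N * ((d:ℝ) * (Δ:ℝ)^2) := by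
        rw [hN, hSQ]
        exact le_trans hoOPT (opt_le_card hd hk hQ hq₀Q)
      have hg0 : gside Δ j = (Δ:ℝ) := by
        rw [hj0']; unfold gside; norm_num
      have hTg' : Tthr d k Δ o j * (Δ:ℝ)^2 * (100*(k:ℝ)) = (d:ℝ)^2 * o := by
        rw [← hg0]
        rw [eq_div_iff (by positivity)] at hTg
        exact hTg
      have hΔR : (1:ℝ) ≤ (Δ:ℝ) := by exact_mod_cast hΔ
      have hTN : Tthr d k Δ o j * 100 * (Δ:ℝ)^2 ≤ N * (d:ℝ)^3 * (Δ:ℝ)^2 := by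
        have h1 : Tthr d k Δ o j * (Δ:ℝ)^2 * 100 ≤ Tthr d k Δ o j * (Δ:ℝ)^2 * (100*(k:ℝ)) := by
          have : (0:ℝ) ≤ Tthr d k Δ o j * (Δ:ℝ)^2 := by positivity
          nlinarith
        have h2 : (d:ℝ)^2 * o ≤ (d:ℝ)^2 * (N * ((d:ℝ) * (Δ:ℝ)^2)) := by
          have : (0:ℝ) ≤ (d:ℝ)^2 := sq_nonneg _
          exact mul_le_mul_of_nonneg_left hoN this
        nlinarith [h1, hTg', h2]
      have hTN' : Tthr d k Δ o j * 100 ≤ N * (d:ℝ)^3 :=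
        le_of_mul_le_mul_right hTN (by positivity)
      nlinarith [mul_le_mul_of_nonneg_right hTN' hcostnn]
    · -- j ≥ 1 : parent has zhat at least its threshold
      have hj1 : 1 ≤ j := by omega
      have hT1pos : 0 < Tthr d k Δ o (j-1) := Tthr_pos (by omega) (by omega) hΔ ho _
      have hcnt := heavy_count_lb hz hR.1 hT1pos.le (Or.inr hR)
      have hCeq : (cellCount d Q v (gside Δ (j-1)) (idx d v (gside Δ (j-1)) q₀) : ℝ) = N := by
        rw [hN, hS, hC]; rfl
      rw [hCeq, Tthr_succ hΔ o j] at hcnt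
      -- hcnt : 0.9 * (T j / 4) ≤ N
      nlinarith [mul_le_mul_of_nonneg_right hcnt hcostnn, hTpos.le, hcostnn,
        mul_nonneg (mul_nonneg hNpos.le hcostnn) (by linarith : (0:ℝ) ≤ (d:ℝ)^3 - 1)]
  -- the geometric term
  have hgterm : Tthr d k Δ o j * (2*N*(d:ℝ)*(gside Δ (j-1))^2)
      ≤ 0.08 * (N * ((d:ℝ)^3 * o)) := by
    have hexp : Tthr d k Δ o j * (2*N*(d:ℝ)*(gside Δ (j-1))^2)
        = 8*N*(d:ℝ) * (Tthr d k Δ o j * (gside Δ j)^2) := by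
      rw [hgrel]; ring
    rw [hexp, hTg]
    rw [mul_div_assoc', div_le_iff₀ (by positivity)]
    have hNd3o : (0:ℝ) ≤ N * ((d:ℝ)^3 * o) := by positivity
    nlinarith [hNd3o, hkR]
  -- combine
  have hcomb : N * (Tthr d k Δ o j * nearDist d q₀ Z ^ 2)
      ≤ N * (9 * (d:ℝ)^3 * cost d Q Z) := by
    have h6 : Tthr d k Δ o j * (N * nearDist d q₀ Z ^2)
        ≤ Tthr d k Δ o j * (2 * cost d Q Z + 2*N*(d:ℝ)*(gside Δ (j-1))^2) :=
      mul_le_mul_of_nonneg_left hsum hTpos.le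
    have h7 : Tthr d k Δ o j * (2 * cost d Q Z + 2*N*(d:ℝ)*(gside Δ (j-1))^2)
        = 2 * Tthr d k Δ o j * cost d Q Z
          + Tthr d k Δ o j * (2*N*(d:ℝ)*(gside Δ (j-1))^2) := by ring
    have h8 : 0.08 * (N * ((d:ℝ)^3 * o)) ≤ 0.08 * (N * ((d:ℝ)^3 * cost d Q Z)) := by
      have : (0:ℝ) ≤ 0.08 * (N * (d:ℝ)^3) := by positivity
      nlinarith [mul_le_mul_of_nonneg_left hcost1 this]
    have h9 : (0:ℝ) ≤ N * ((d:ℝ)^3 * cost d Q Z) := by positivity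
    nlinarith [h6, h7, hkey, hgterm, h8, h9]
  exact le_of_mul_le_mul_left hcomb hNpos

lemma light_level {k L Δ : ℕ} {Q : Finset (Pt d)} {v : Pt d} {o ε : ℝ}
    {zhat : ℤ → (Fin d → ℤ) → ℝ} {qhat : ℕ → ℝ}
    (hq : QhatAccurate d k L Δ Q v o ε zhat qhat)
    (hε0 : 0 < ε) (hε1 : ε < 1/2)
    {j : ℕ} (hjL : j ≤ L) (hjn : j ∉ levelI d k L Δ o ε qhat)
    (hγT : 0 < gammaPar d L ε * Tthr d k Δ o j) :
    ((Qlevel d k L Δ Q v o zhat j).card : ℝ)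
      ≤ 1.1 * (gammaPar d L ε * Tthr d k Δ o j) := by
  have hjI : qhat j < gammaPar d L ε * Tthr d k Δ o j := by
    by_contra hc
    push_neg at hc
    exact hjn (Finset.mem_filter.mpr ⟨Finset.mem_range.mpr (by omega), hc⟩)
  obtain ⟨hq0, hacc⟩ := hq j hjL
  have hcnn : (0:ℝ) ≤ ((Qlevel d k L Δ Q v o zhat j).card : ℝ) := Nat.cast_nonneg _
  rcases hacc with h | ⟨hlo, _⟩
  · have h' := abs_le.mp h
    nlinarith [h'.1, h'.2, hγT.le]
  · nlinarith [hcnn]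

end Aux
-- ========================= end auxiliary lemmas =========================

/-- if `0 < o ≤ OPT`, then for every `i ∈ {0,…,L}`, every `p ∈ Q_i`,
and every `Z` with `|Z| = k`:
`dist(p,Z)² ≤ (10·d³/T_i(o))·Σ_{q ∈ Q^I} dist(q,Z)²`, i.e. the sensitivity of `p`
with respect to `Q^I` is at most `s′(p) = 10·d³/T_i(o)`. -/
theorem sensitivity_upper_bound
    (d k L Δ : ℕ) (hd : 1 ≤ d) (hk : 1 ≤ k) (hL : 1 ≤ L) (hΔ : Δ = 2 ^ L)
    (v : Pt d) (Q : Finset (Pt d))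
    (hQ : ∀ p ∈ Q, ∀ α : Fin d, ∃ m : ℤ, 1 ≤ m ∧ m ≤ (Δ : ℤ) ∧ p α = (m : ℝ))
    (o : ℝ) (ho : 0 < o) (hoOPT : o ≤ OPTcost d k Q)
    (zhat : ℤ → (Fin d → ℤ) → ℝ)
    (hz : ZhatAccurate d k L Δ Q v o zhat)
    (ε : ℝ) (hε0 : 0 < ε) (hε1 : ε < 1 / 2)
    (qhat : ℕ → ℝ)
    (hq : QhatAccurate d k L Δ Q v o ε zhat qhat) :
    ∀ i : ℕ, i ≤ L → ∀ p ∈ Qlevel d k L Δ Q v o zhat i,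
      ∀ Z : Finset (Pt d), Z.card = k →
        nearDist d p Z ^ 2 ≤
          (10 * (d : ℝ) ^ 3 / Tthr d k Δ o i) *
            ∑ q ∈ QI d k L Δ Q v o ε zhat qhat, nearDist d q Z ^ 2 := by
  intro i hiL p hp Z hZk
  classical
  have hΔpos : 0 < Δ := by rw [hΔ]; positivity
  have hdR : (1:ℝ) ≤ (d:ℝ) := by exact_mod_cast hd
  have hLR : (1:ℝ) ≤ (L:ℝ) := by exact_mod_cast hL
  have hZne : Z.Nonempty := Finset.card_pos.mp (by omega)
  have hcost1 : o ≤ cost d Q Z := le_trans hoOPT (OPT_le_cost k Q Z hZk)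
  have hcostnn : 0 ≤ cost d Q Z := le_trans ho.le hcost1
  obtain ⟨hpQ, hcr⟩ := Finset.mem_filter.mp hp
  have hTpos : 0 < Tthr d k Δ o (i:ℤ) := Tthr_pos (by omega) (by omega) hΔpos ho _
  have hd3pos : (0:ℝ) < (d:ℝ)^3 := by positivity
  have hγpos : 0 < gammaPar d L ε := by
    unfold gammaPar
    apply div_pos hε0
    positivity
  -- Q is contained in a single cell of G_{-1}
  have hQsub : (Q : Set (Pt d)) ⊆ cell d v (gside Δ (-1)) (idx d v (gside Δ (-1)) p) := by
    have hH := hcr.2.2.2 (-1) le_rfl (by omega) _ (cell_subset_cell hΔpos (by omega) p)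
    rcases hH with ⟨_, hsub⟩ | ⟨h0, _⟩
    · exact hsub
    · exfalso; omega
  -- every point of Q belongs to some Q_j with j ≤ L
  have hlev : ∀ q ∈ Q, ∃ j : ℕ, j ≤ L ∧ q ∈ Qlevel d k L Δ Q v o zhat j := by
    intro q hq
    have hq' : q ∈ cell d v (gside Δ (-1)) (idx d v (gside Δ (-1)) p) := hQsub hq
    have heqidx : idx d v (gside Δ (-1)) p = idx d v (gside Δ (-1)) q :=
      (mem_cell_iff (gside_pos hΔpos _)).mp hq'
    have hQsubq : (Q : Set (Pt d)) ⊆ cell d v (gside Δ (-1)) (idx d v (gside Δ (-1)) q) :=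
      heqidx ▸ hQsub
    have hPL : ¬ Heavy d k L Δ Q v o zhat (L:ℤ) (idx d v (gside Δ (L:ℤ)) q) := by
      rintro (⟨hL1, _⟩ | ⟨_, hL2, _⟩) <;> omega
    have hP : ∃ n : ℕ, ¬ Heavy d k L Δ Q v o zhat (n:ℤ) (idx d v (gside Δ (n:ℤ)) q) :=
      ⟨L, hPL⟩
    refine ⟨Nat.find hP, Nat.find_min' hP hPL, Finset.mem_filter.mpr ⟨hq, ?_, ?_, ?_, ?_⟩⟩
    · exact_mod_cast Nat.zero_le _
    · exact_mod_cast Nat.find_min' hP hPL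
    · exact Nat.find_spec hP
    · intro j' hj'm hj'lt m hm
      have hqc : q ∈ cell d v (gside Δ j') m :=
        hm (self_mem_cell (gside_pos hΔpos _) q)
      have hmeq : m = idx d v (gside Δ j') q :=
        (mem_cell_iff (gside_pos hΔpos _)).mp hqc
      subst hmeq
      by_cases hj'0 : j' = -1
      · subst hj'0
        exact Or.inl ⟨rfl, hQsubq⟩
      · have h0j' : 0 ≤ j' := by omega
        lift j' to ℕ using h0j' with n'
        have hn' : n' < Nat.find hP := by exact_mod_cast hj'lt
        exact not_not.mp (Nat.find_min hP hn')
  -- distinct levels are disjoint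
  have hdisj : ∀ j₁ j₂ : ℕ, j₁ < j₂ →
      Disjoint (Qlevel d k L Δ Q v o zhat j₁) (Qlevel d k L Δ Q v o zhat j₂) := by
    intro j₁ j₂ hlt
    rw [Finset.disjoint_left]
    intro q h1 h2
    obtain ⟨hqQ, hc1⟩ := Finset.mem_filter.mp h1
    obtain ⟨_, hc2⟩ := Finset.mem_filter.mp h2
    exact hc1.2.2.1 (hc2.2.2.2 (j₁:ℤ) (by omega) (by exact_mod_cast hlt) _
      (cell_subset_cell hΔpos (by exact_mod_cast hlt.le) q))
  set QIs := QI d k L Δ Q v o ε zhat qhat with hQIs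
  set Jc := Finset.range (L+1) \ levelI d k L Δ o ε qhat with hJc
  have hQIsubQ : QIs ⊆ Q := by
    intro q hq
    obtain ⟨j, _, hqj⟩ := Finset.mem_biUnion.mp hq
    exact Finset.filter_subset _ _ hqj
  -- bound the cost of the complement
  have hrest : ∑ q ∈ Q \ QIs, nearDist d q Z ^ 2
      ≤ ∑ j ∈ Jc, ∑ q ∈ Qlevel d k L Δ Q v o zhat j, nearDist d q Z ^ 2 := by
    have hsub2 : Q \ QIs ⊆ Jc.biUnion (fun j => Qlevel d k L Δ Q v o zhat j) := by
      intro q hq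
      obtain ⟨hqQ, hqn⟩ := Finset.mem_sdiff.mp hq
      obtain ⟨j, hjL', hqj⟩ := hlev q hqQ
      have hjnot : j ∉ levelI d k L Δ o ε qhat := fun hjI =>
        hqn (Finset.mem_biUnion.mpr ⟨j, hjI, hqj⟩)
      exact Finset.mem_biUnion.mpr ⟨j,
        Finset.mem_sdiff.mpr ⟨Finset.mem_range.mpr (by omega), hjnot⟩, hqj⟩
    calc ∑ q ∈ Q \ QIs, nearDist d q Z ^ 2
        ≤ ∑ q ∈ Jc.biUnion (fun j => Qlevel d k L Δ Q v o zhat j), nearDist d q Z ^ 2 :=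
          Finset.sum_le_sum_of_subset_of_nonneg hsub2 (fun q _ _ => sq_nonneg _)
      _ = ∑ j ∈ Jc, ∑ q ∈ Qlevel d k L Δ Q v o zhat j, nearDist d q Z ^ 2 := by
          apply Finset.sum_biUnion
          intro j₁ _ j₂ _ hne
          rcases Nat.lt_or_ge j₁ j₂ with h | h
          · exact hdisj j₁ j₂ h
          · have : j₂ < j₁ := by omega
            exact (hdisj j₂ j₁ this).symm
  -- each light level contributes little
  have hlevbd : ∀ j ∈ Jc, ∑ q ∈ Qlevel d k L Δ Q v o zhat j, nearDist d q Z ^ 2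
      ≤ 9.9 * gammaPar d L ε * (d:ℝ)^3 * cost d Q Z := by
    intro j hj
    obtain ⟨hjr, hjn⟩ := Finset.mem_sdiff.mp hj
    have hjL' : j ≤ L := by
      have := Finset.mem_range.mp hjr; omega
    have hTj : 0 < Tthr d k Δ o (j:ℤ) := Tthr_pos (by omega) (by omega) hΔpos ho _
    have hγT : 0 < gammaPar d L ε * Tthr d k Δ o (j:ℤ) := mul_pos hγpos hTj
    have hcard := light_level hq hε0 hε1 hjL' hjn hγT
    have hterm : ∀ q ∈ Qlevel d k L Δ Q v o zhat j,
        Tthr d k Δ o (j:ℤ) * nearDist d q Z ^ 2 ≤ 9 * (d:ℝ)^3 * cost d Q Z := by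
      intro q hqj
      exact key_bound d k L Δ hd hk hL hΔpos v Q hQ o ho hoOPT zhat hz (j:ℤ)
        (by omega) (by exact_mod_cast hjL') q hqj Z hZk
    have hsum1 : Tthr d k Δ o (j:ℤ) * ∑ q ∈ Qlevel d k L Δ Q v o zhat j, nearDist d q Z ^ 2
        ≤ ((Qlevel d k L Δ Q v o zhat j).card : ℝ) * (9 * (d:ℝ)^3 * cost d Q Z) := by
      rw [Finset.mul_sum]
      calc ∑ q ∈ Qlevel d k L Δ Q v o zhat j, Tthr d k Δ o (j:ℤ) * nearDist d q Z ^ 2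
          ≤ ∑ _q ∈ Qlevel d k L Δ Q v o zhat j, 9 * (d:ℝ)^3 * cost d Q Z :=
            Finset.sum_le_sum hterm
        _ = ((Qlevel d k L Δ Q v o zhat j).card : ℝ) * (9 * (d:ℝ)^3 * cost d Q Z) := by
            rw [Finset.sum_const, nsmul_eq_mul]
    have h9 : (0:ℝ) ≤ 9 * (d:ℝ)^3 * cost d Q Z := by positivity
    have hsum2 : ((Qlevel d k L Δ Q v o zhat j).card : ℝ) * (9 * (d:ℝ)^3 * cost d Q Z)
        ≤ 1.1 * (gammaPar d L ε * Tthr d k Δ o (j:ℤ)) * (9 * (d:ℝ)^3 * cost d Q Z) :=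
      mul_le_mul_of_nonneg_right hcard h9
    have hfin : Tthr d k Δ o (j:ℤ) * ∑ q ∈ Qlevel d k L Δ Q v o zhat j, nearDist d q Z ^ 2
        ≤ Tthr d k Δ o (j:ℤ) * (9.9 * gammaPar d L ε * (d:ℝ)^3 * cost d Q Z) := by
      calc Tthr d k Δ o (j:ℤ) * ∑ q ∈ Qlevel d k L Δ Q v o zhat j, nearDist d q Z ^ 2
          ≤ 1.1 * (gammaPar d L ε * Tthr d k Δ o (j:ℤ)) * (9 * (d:ℝ)^3 * cost d Q Z) :=
            le_trans hsum1 hsum2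
        _ = Tthr d k Δ o (j:ℤ) * (9.9 * gammaPar d L ε * (d:ℝ)^3 * cost d Q Z) := by ring
    exact le_of_mul_le_mul_left hfin hTj
  -- total complement bound
  have hJcard : (Jc.card : ℝ) ≤ 2 * (L:ℝ) := by
    have h1 : Jc.card ≤ L + 1 := by
      calc Jc.card ≤ (Finset.range (L+1)).card := Finset.card_le_card (Finset.sdiff_subset)
        _ = L + 1 := Finset.card_range _
    have h2 : (Jc.card : ℝ) ≤ (L:ℝ) + 1 := by exact_mod_cast h1
    linarith
  have hγd3 : gammaPar d L ε * (d:ℝ)^3 = ε / (1600 * (L:ℝ)) := by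
    unfold gammaPar
    field_simp
  have hrest2 : ∑ q ∈ Q \ QIs, nearDist d q Z ^ 2 ≤ 0.01 * cost d Q Z := by
    have hbd : ∑ j ∈ Jc, ∑ q ∈ Qlevel d k L Δ Q v o zhat j, nearDist d q Z ^ 2
        ≤ (Jc.card : ℝ) * (9.9 * gammaPar d L ε * (d:ℝ)^3 * cost d Q Z) := by
      calc ∑ j ∈ Jc, ∑ q ∈ Qlevel d k L Δ Q v o zhat j, nearDist d q Z ^ 2
          ≤ ∑ _j ∈ Jc, 9.9 * gammaPar d L ε * (d:ℝ)^3 * cost d Q Z :=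
            Finset.sum_le_sum hlevbd
        _ = (Jc.card : ℝ) * (9.9 * gammaPar d L ε * (d:ℝ)^3 * cost d Q Z) := by
            rw [Finset.sum_const, nsmul_eq_mul]
      
    have hγnn : (0:ℝ) ≤ 9.9 * gammaPar d L ε * (d:ℝ)^3 * cost d Q Z := by positivity
    have hbd2 : (Jc.card : ℝ) * (9.9 * gammaPar d L ε * (d:ℝ)^3 * cost d Q Z)
        ≤ 2 * (L:ℝ) * (9.9 * gammaPar d L ε * (d:ℝ)^3 * cost d Q Z) :=
      mul_le_mul_of_nonneg_right hJcard hγnn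
    have hLne : (L:ℝ) ≠ 0 := by positivity
    have heq : 2 * (L:ℝ) * (9.9 * gammaPar d L ε * (d:ℝ)^3 * cost d Q Z)
        = (19.8 / 1600) * ε * cost d Q Z := by
      have : 2 * (L:ℝ) * (9.9 * gammaPar d L ε * (d:ℝ)^3 * cost d Q Z)
          = 2 * (L:ℝ) * 9.9 * (gammaPar d L ε * (d:ℝ)^3) * cost d Q Z := by ring
      rw [this, hγd3]
      field_simp
      ring
    have hfin : (19.8 / 1600) * ε * cost d Q Z ≤ 0.01 * cost d Q Z := by
      nlinarith [hε1, hε0.le, hcostnn]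
    linarith [hrest, hbd, hbd2, heq ▸ hbd2]
  -- the cost of Q^I is almost everything
  have hsplit : ∑ q ∈ Q \ QIs, nearDist d q Z ^ 2 + ∑ q ∈ QIs, nearDist d q Z ^ 2
      = cost d Q Z := Finset.sum_sdiff hQIsubQ
  have hQIge : 0.99 * cost d Q Z ≤ ∑ q ∈ QIs, nearDist d q Z ^ 2 := by linarith
  -- conclude
  have hkeyp : Tthr d k Δ o (i:ℤ) * nearDist d p Z ^ 2 ≤ 9 * (d:ℝ)^3 * cost d Q Z :=
    key_bound d k L Δ hd hk hL hΔpos v Q hQ o ho hoOPT zhat hz (i:ℤ)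
      (by omega) (by exact_mod_cast hiL) p hp Z hZk
  rw [div_mul_eq_mul_div, le_div_iff₀ hTpos, mul_comm]
  have h10 : (0:ℝ) ≤ 10 * (d:ℝ)^3 := by positivity
  have hmul : 10 * (d:ℝ)^3 * (0.99 * cost d Q Z)
      ≤ 10 * (d:ℝ)^3 * ∑ q ∈ QIs, nearDist d q Z ^ 2 :=
    mul_le_mul_of_nonneg_left hQIge h10
  have hc9 : 9 * (d:ℝ)^3 * cost d Q Z ≤ 10 * (d:ℝ)^3 * (0.99 * cost d Q Z) := by
    nlinarith [hd3pos.le, hcostnn]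
  linarith [hkeyp, hc9, hmul]


end
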